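/- Let f ∈ C(R,K) have the wavelet expansion f = ∑_{r∈ℛ} b_r(f) χ_r. Then f ∈ C^1(R,K) if and only if for every a ∈ R the limit lim_{r→a, r∈ℛ_+\{a}} b_r(f)γ_r^{-1} exists. -/

import Mathlib

open scoped ENNReal NNReal
open Filter Topology

noncomputable section

namespace DSW

variable {K : Type*} [NontriviallyNormedField K] [CompleteSpace K] [IsUltrametricDist K]

/-- The ring of integers `R = {x : K | ‖x‖ ≤ 1}`, as a subset of `K`. -/
def Rint (K : Type*) [NontriviallyNormedField K] : Set K := {x : K | ‖x‖ ≤ 1}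

/-- `∇ⁿR`: the set of tuples of pairwise distinct elements of `R`. -/
def nabla (K : Type*) [NontriviallyNormedField K] (n : ℕ) : Set (Fin n → K) :=
  {x | (∀ i, ‖x i‖ ≤ 1) ∧ Function.Injective x}

/-- The `n`-th difference quotient `Φₙ f`. -/
def Phi (f : K → K) : ∀ n : ℕ, (Fin (n + 1) → K) → K
  | 0, x => f (x 0)
  | n + 1, x =>
      (Phi f n (Fin.cons (x 0) fun i => x i.succ.succ) -
        Phi f n (Fin.cons (x 1) fun i => x i.succ.succ)) / (x 0 - x 1)

/-- `f` is a `Cⁿ`-function: `Φₙ f` extends to a continuous function on `R^(n+1)`. -/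
def IsCn (f : K → K) (n : ℕ) : Prop :=
  ∃ g : (Fin (n + 1) → K) → K,
    ContinuousOn g {x | ∀ i, ‖x i‖ ≤ 1} ∧
      ∀ x : Fin (n + 1) → K, (∀ i, ‖x i‖ ≤ 1) → Function.Injective x → g x = Phi f n x

/-- `Dₙ f a = Φₙ f (a, …, a)`, defined (for `n ≥ 1`) as the limit of `Φₙ f` at the
diagonal point `(a, …, a)`, and `D₀ f = f`. -/
def Dq (f : K → K) : ℕ → K → K
  | 0 => f
  | n + 1 => fun a =>
      limUnder (𝓝[{x : Fin (n + 2) → K | Function.Injective x}] fun _ => a) (Phi f (n + 1))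

/-- `ψⱼ f (x, y) = (f x − f y − ∑_{l=1}^{j} (x−y)^l Dₗf y) / (x−y)^(j+1)`. -/
def psi (f : K → K) (j : ℕ) (x y : K) : K :=
  (f x - f y - ∑ l ∈ Finset.Icc 1 j, (x - y) ^ l * Dq f l y) / (x - y) ^ (j + 1)

variable (π : K) (𝒯 : Set K)

/-- `ℛₘ`: the set of sums `∑_{i<m} aᵢ πⁱ` with digits in `𝒯`. -/
def Rm (m : ℕ) : Set K :=
  {x | ∃ a : Fin m → K, (∀ i, a i ∈ 𝒯) ∧ x = ∑ i, a i * π ^ (i : ℕ)}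

/-- `ℛ = ⋃ₘ ℛₘ`. -/
def RR : Set K := ⋃ m, Rm π 𝒯 m

/-- `ℛ₊ = ℛ \ {0}`. -/
def RPlus : Set K := RR π 𝒯 \ {0}

/-- The length `l(r)`: the least `m` with `r ∈ ℛₘ`. -/
def len (r : K) : ℕ := sInf {m | r ∈ Rm π 𝒯 m}

/-- `χ_r`: characteristic function of the disk `{x : ‖x − r‖ ≤ ‖π‖^(l r)}`. -/
def chi (r x : K) : K := if ‖x - r‖ ≤ ‖π‖ ^ len π 𝒯 r then 1 else 0

/-- The truncation `x_m`: the unique element of `ℛₘ` with `‖x − x_m‖ ≤ ‖π‖^m`. -/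
def trunc (x : K) (m : ℕ) : K :=
  Classical.epsilon fun s => s ∈ Rm π 𝒯 m ∧ ‖x - s‖ ≤ ‖π‖ ^ m

/-- `r₋`: the truncation of `r` dropping the top digit. -/
def rminus (r : K) : K := trunc π 𝒯 r (len π 𝒯 r - 1)

open Classical in
/-- `γ_r = 1` if `r = 0`, `γ_r = r − r₋` otherwise. -/
def gamma (r : K) : K := if r = 0 then 1 else r - rminus π 𝒯 r

open Classical in
/-- The wavelet coefficients `b_r(f)` of a continuous function. -/
def b0 (f : K → K) (r : K) : K := if r = 0 then f 0 else f r - f (rminus π 𝒯 r)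

/-- `c` is the coefficient family of the expansion of `f` with respect to the wavelet
basis `{γ_r^(n−j) (x − r)^j χ_r(x) : r ∈ ℛ, 0 ≤ j ≤ n}` of `Cⁿ(R, K)`. -/
def IsExpansion (n : ℕ) (f : K → K) (c : K → ℕ → K) : Prop :=
  ∀ x ∈ Rint K, HasSum
    (fun p : RR π 𝒯 × Fin (n + 1) =>
      c ↑p.1 ↑p.2 * gamma π 𝒯 ↑p.1 ^ (n - (p.2 : ℕ)) * (x - ↑p.1) ^ (p.2 : ℕ) *
        chi π 𝒯 ↑p.1 x)
    (f x)

/-- The coefficients `b_r^{n,j}(f)` of the expansion of `f ∈ Cⁿ(R,K)`. -/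
def bcoef (n : ℕ) (f : K → K) : K → ℕ → K := Classical.epsilon (IsExpansion π 𝒯 n f)

/-- The norm `|f|_n` on `Cⁿ(R, K)`, with values in `ℝ≥0∞`; `|f|_0` is the sup norm and
`|f|_(n+1) = sup_{r ∈ ℛ} max_{0 ≤ j ≤ n} |b_r^{n,j}(f) γ_r⁻¹|`. -/
def CnNorm : ℕ → (K → K) → ℝ≥0∞
  | 0, f => ⨆ x : Rint K, (‖f ↑x‖₊ : ℝ≥0∞)
  | n + 1, f =>
      ⨆ r : RR π 𝒯, ⨆ j : Fin (n + 1),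
        (‖bcoef π 𝒯 n f ↑r ↑j * (gamma π 𝒯 ↑r)⁻¹‖₊ : ℝ≥0∞)

/-- `K` is a local field with uniformizer `π`, residue field of cardinality `q`, and
set of residue representatives `𝒯` (containing `0`). -/
structure LocalFieldData (π : K) (𝒯 : Set K) (q : ℕ) : Prop where
  one_lt_q : 1 < q
  norm_pi : ‖π‖ = (q : ℝ)⁻¹
  norm_discrete : ∀ x : K, x ≠ 0 → ∃ n : ℤ, ‖x‖ = ‖π‖ ^ n
  rep_subset : 𝒯 ⊆ Rint K
  zero_mem : (0 : K) ∈ 𝒯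
  finite_rep : 𝒯.Finite
  card_rep : Nat.card 𝒯 = q
  rep_unique : ∀ x : K, ‖x‖ ≤ 1 → ∃! t, t ∈ 𝒯 ∧ ‖x - t‖ < 1


/-- The norm `|f|₁ = sup_{r ∈ ℛ} |b_r(f) γ_r⁻¹|` on `C¹(R, K)`. -/
def wnorm1 (f : K → K) : ℝ≥0∞ :=
  ⨆ r : RR π 𝒯, (‖b0 π 𝒯 f ↑r * (gamma π 𝒯 ↑r)⁻¹‖₊ : ℝ≥0∞)

/-- The `Cⁿ`-antiderivation `Pₙ f (x) = ∑_{j<n} ∑_m f⁽ʲ⁾(x_m)/(j+1)! (x_{m+1} − x_m)^(j+1)`. -/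
def Pn (n : ℕ) (f : K → K) (x : K) : K :=
  ∑ j ∈ Finset.range n, ∑' m : ℕ,
    iteratedDeriv j f (trunc π 𝒯 x m) / (((j + 1).factorial : ℕ) : K) *
      (trunc π 𝒯 x (m + 1) - trunc π 𝒯 x m) ^ (j + 1)

/-- `Pₙ ∘ Pₙ₋₁ ∘ ⋯ ∘ P₁`. -/
def Tnaux : ℕ → (K → K) → K → K
  | 0, f => f
  | n + 1, f => Pn π 𝒯 (n + 1) (Tnaux n f)

section Aux
set_option linter.unusedSectionVars false

variable {K : Type*} [NontriviallyNormedField K] [CompleteSpace K] [IsUltrametricDist K]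
variable {π : K} {𝒯 : Set K} {q : ℕ}

lemma norm_sub_le_max' (a b : K) : ‖a - b‖ ≤ max ‖a‖ ‖b‖ := by
  rw [sub_eq_add_neg]
  exact (IsUltrametricDist.norm_add_le_max a (-b)).trans (by simp)

namespace LocalFieldData

variable (hK : LocalFieldData π 𝒯 q)
include hK

lemma normπ_pos : 0 < ‖π‖ := by
  rw [hK.norm_pi]
  have : (0:ℝ) < q := by exact_mod_cast Nat.lt_of_lt_of_le Nat.zero_lt_one hK.one_lt_q.le
  positivity

lemma π_ne : π ≠ 0 := by
  intro h
  have := hK.normπ_pos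
  rw [h, norm_zero] at this
  exact lt_irrefl 0 this

lemma normπ_lt_one : ‖π‖ < 1 := by
  rw [hK.norm_pi]
  rw [inv_lt_one_iff₀]
  right
  exact_mod_cast hK.one_lt_q

/-- if `‖x‖ < ‖π‖^m` then `‖x‖ ≤ ‖π‖^(m+1)` -/
lemma norm_lt_pow {x : K} {m : ℕ} (h : ‖x‖ < ‖π‖ ^ m) : ‖x‖ ≤ ‖π‖ ^ (m + 1) := by
  rcases eq_or_ne x 0 with rfl | hx
  · rw [norm_zero]; positivity
  obtain ⟨n, hn⟩ := hK.norm_discrete x hx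
  rw [hn] at h ⊢
  have h1 : ‖π‖ ^ n < ‖π‖ ^ (m : ℤ) := by exact_mod_cast h
  have hb0 := hK.normπ_pos
  have hb1 := hK.normπ_lt_one
  have hmn : (m : ℤ) < n := by
    by_contra hc
    push_neg at hc
    exact absurd (zpow_le_zpow_right_of_le_one₀ hb0 hb1.le hc) (not_le.mpr h1)
  calc ‖π‖ ^ n ≤ ‖π‖ ^ ((m : ℤ) + 1) :=
        zpow_le_zpow_right_of_le_one₀ hb0 hb1.le (by omega)
    _ = ‖π‖ ^ (m + 1) := by
        rw [← zpow_natCast]; norm_num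

/-- two distinct digits are at distance 1 -/
lemma digit_dist {a b : K} (ha : a ∈ 𝒯) (hb : b ∈ 𝒯) (hne : a ≠ b) : ‖a - b‖ = 1 := by
  have h1 : ‖a - b‖ ≤ 1 := by
    refine (norm_sub_le_max' a b).trans ?_
    simp only [max_le_iff]
    exact ⟨hK.rep_subset ha, hK.rep_subset hb⟩
  rcases lt_or_eq_of_le h1 with h | h
  · exfalso
    obtain ⟨t, _, hu⟩ := hK.rep_unique a (hK.rep_subset ha)
    have hea : t = a := (hu a ⟨ha, by simp⟩).symm
    have heb : t = b := (hu b ⟨hb, h⟩).symm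
    exact hne (hea ▸ heb)
  · exact h

end LocalFieldData
end Aux

section Aux2
set_option linter.unusedSectionVars false

variable {K : Type*} [NontriviallyNormedField K] [CompleteSpace K] [IsUltrametricDist K]
variable {π : K} {𝒯 : Set K} {q : ℕ}

namespace LocalFieldData

variable (hK : LocalFieldData π 𝒯 q)
include hK

lemma Rm_zero_mem (m : ℕ) : (0 : K) ∈ Rm π 𝒯 m :=
  ⟨fun _ => 0, fun _ => hK.zero_mem, by simp⟩

lemma Rm_zero' : Rm π 𝒯 0 = {0} := by
  ext x
  constructor
  · rintro ⟨a, -, rfl⟩; simp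
  · rintro rfl; exact hK.Rm_zero_mem 0

lemma Rm_snoc {m : ℕ} {s t : K} (hs : s ∈ Rm π 𝒯 m) (ht : t ∈ 𝒯) :
    s + t * π ^ m ∈ Rm π 𝒯 (m + 1) := by
  obtain ⟨a, ha, rfl⟩ := hs
  refine ⟨Fin.snoc a t, ?_, ?_⟩
  · intro i
    refine Fin.lastCases ?_ ?_ i
    · simpa using ht
    · intro j; simpa using ha j
  · rw [Fin.sum_univ_castSucc]
    simp

lemma Rm_mono {m n : ℕ} (h : m ≤ n) : Rm π 𝒯 m ⊆ Rm π 𝒯 n := by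
  induction n with
  | zero => rw [Nat.le_zero] at h; subst h; exact subset_rfl
  | succ n ih =>
    rcases Nat.lt_or_ge m (n + 1) with h' | h'
    · intro x hx
      have hx' : x ∈ Rm π 𝒯 n := ih (by omega) hx
      have := hK.Rm_snoc hx' hK.zero_mem
      simpa using this
    · have : m = n + 1 := by omega
      subst this; exact subset_rfl

lemma Rm_norm_le {m : ℕ} {s : K} (hs : s ∈ Rm π 𝒯 m) : ‖s‖ ≤ 1 := by
  obtain ⟨a, ha, rfl⟩ := hs
  refine IsUltrametricDist.norm_sum_le_of_forall_le_of_nonneg zero_le_one ?_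
  intro i _
  rw [norm_mul, norm_pow]
  have h1 : ‖a i‖ ≤ 1 := hK.rep_subset (ha i)
  have h2 : ‖π‖ ^ (i : ℕ) ≤ 1 := pow_le_one₀ hK.normπ_pos.le hK.normπ_lt_one.le
  calc ‖a i‖ * ‖π‖ ^ (i : ℕ) ≤ 1 * 1 := by
        exact mul_le_mul h1 h2 (by positivity) zero_le_one
    _ = 1 := by norm_num

lemma Rm_split {m : ℕ} {s : K} (hs : s ∈ Rm π 𝒯 (m + 1)) :
    ∃ t ∈ 𝒯, ∃ s' ∈ Rm π 𝒯 m, s = t + π * s' := by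
  obtain ⟨a, ha, rfl⟩ := hs
  refine ⟨a 0, ha 0, ∑ i : Fin m, a i.succ * π ^ (i : ℕ), ⟨fun i => a i.succ, fun i => ha i.succ, rfl⟩, ?_⟩
  rw [Fin.sum_univ_succ, Finset.mul_sum]
  simp only [Fin.val_zero, pow_zero, mul_one, Fin.val_succ]
  congr 1
  refine Finset.sum_congr rfl fun i _ => ?_
  ring

lemma sep : ∀ (m : ℕ) {s t : K}, s ∈ Rm π 𝒯 m → t ∈ Rm π 𝒯 m → ‖s - t‖ ≤ ‖π‖ ^ m → s = t := by
  intro m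
  induction m with
  | zero =>
    intro s t hs ht _
    rw [hK.Rm_zero'] at hs ht
    rw [Set.mem_singleton_iff] at hs ht
    rw [hs, ht]
  | succ m ih =>
    intro s t hs ht h
    obtain ⟨ta, hta, sa, hsa, rfl⟩ := hK.Rm_split hs
    obtain ⟨tb, htb, sb, hsb, rfl⟩ := hK.Rm_split ht
    have hsab : ‖sa - sb‖ ≤ 1 := by
      refine (norm_sub_le_max' sa sb).trans ?_
      simp only [max_le_iff]
      exact ⟨hK.Rm_norm_le hsa, hK.Rm_norm_le hsb⟩
    have hπs : ‖π * (sa - sb)‖ ≤ ‖π‖ := by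
      rw [norm_mul]
      calc ‖π‖ * ‖sa - sb‖ ≤ ‖π‖ * 1 := by
            exact mul_le_mul_of_nonneg_left hsab hK.normπ_pos.le
        _ = ‖π‖ := mul_one _
    have hd : ta = tb := by
      by_contra hne
      have h1 : ‖ta - tb‖ = 1 := hK.digit_dist hta htb hne
      have he : ta - tb = (ta + π * sa - (tb + π * sb)) - π * (sa - sb) := by ring
      have h2 : ‖ta - tb‖ < 1 := by
        rw [he]
        refine lt_of_le_of_lt (norm_sub_le_max' _ _) ?_
        rw [max_lt_iff]
        constructor
        · exact lt_of_le_of_lt h (pow_lt_one₀ hK.normπ_pos.le hK.normπ_lt_one (by omega))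
        · exact lt_of_le_of_lt hπs hK.normπ_lt_one
      rw [h1] at h2; exact lt_irrefl 1 h2
    subst hd
    have he : ta + π * sa - (ta + π * sb) = π * (sa - sb) := by ring
    rw [he] at h
    have h3 : ‖sa - sb‖ ≤ ‖π‖ ^ m := by
      rw [norm_mul, pow_succ, mul_comm (‖π‖ ^ m) ‖π‖] at h
      exact le_of_mul_le_mul_left (by linarith [h]) hK.normπ_pos
    rw [ih hsa hsb h3]

lemma trunc_exists {x : K} (hx : ‖x‖ ≤ 1) : ∀ m : ℕ, ∃ s, s ∈ Rm π 𝒯 m ∧ ‖x - s‖ ≤ ‖π‖ ^ m := by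
  intro m
  induction m with
  | zero => exact ⟨0, hK.Rm_zero_mem 0, by simpa using hx⟩
  | succ m ih =>
    obtain ⟨s, hs, hd⟩ := ih
    have hπm : (π : K) ^ m ≠ 0 := pow_ne_zero m hK.π_ne
    set u := (x - s) / π ^ m with hu_def
    have hu : ‖u‖ ≤ 1 := by
      rw [hu_def, norm_div, norm_pow]
      rw [div_le_one (pow_pos hK.normπ_pos m)]
      simpa using hd
    obtain ⟨t, ⟨htT, htu⟩, -⟩ := hK.rep_unique u hu
    refine ⟨s + t * π ^ m, hK.Rm_snoc hs htT, ?_⟩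
    have he : x - (s + t * π ^ m) = (u - t) * π ^ m := by
      rw [hu_def]; field_simp; ring
    rw [he, norm_mul, norm_pow]
    have hle : ‖u - t‖ ≤ ‖π‖ := by
      have := hK.norm_lt_pow (x := u - t) (m := 0) (by simpa using htu)
      simpa using this
    calc ‖u - t‖ * ‖π‖ ^ m ≤ ‖π‖ * ‖π‖ ^ m :=
          mul_le_mul_of_nonneg_right hle (by positivity)
      _ = ‖π‖ ^ (m + 1) := by ring

lemma trunc_spec {x : K} (hx : ‖x‖ ≤ 1) (m : ℕ) :
    trunc π 𝒯 x m ∈ Rm π 𝒯 m ∧ ‖x - trunc π 𝒯 x m‖ ≤ ‖π‖ ^ m :=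
  Classical.epsilon_spec (hK.trunc_exists hx m)

lemma trunc_eq {x s : K} (hx : ‖x‖ ≤ 1) {m : ℕ} (hs : s ∈ Rm π 𝒯 m)
    (h : ‖x - s‖ ≤ ‖π‖ ^ m) : trunc π 𝒯 x m = s := by
  refine hK.sep m (hK.trunc_spec hx m).1 hs ?_
  have he : trunc π 𝒯 x m - s = (x - s) - (x - trunc π 𝒯 x m) := by ring
  rw [he]
  refine (norm_sub_le_max' _ _).trans ?_
  rw [max_le_iff]
  exact ⟨h, (hK.trunc_spec hx m).2⟩

end LocalFieldData
end Aux2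

section Aux3
set_option linter.unusedSectionVars false
set_option maxHeartbeats 1000000

variable {K : Type*} [NontriviallyNormedField K] [CompleteSpace K] [IsUltrametricDist K]
variable {π : K} {𝒯 : Set K} {q : ℕ}

lemma DSW.mem_RPlus_iff {r : K} : r ∈ RPlus π 𝒯 ↔ r ∈ RR π 𝒯 ∧ r ≠ 0 := by
  simp [RPlus]

namespace LocalFieldData

variable (hK : LocalFieldData π 𝒯 q)
include hK

lemma Rm_subset_RR (m : ℕ) : Rm π 𝒯 m ⊆ RR π 𝒯 := Set.subset_iUnion (fun m => Rm π 𝒯 m) m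

lemma mem_Rm_len {r : K} (h : r ∈ RR π 𝒯) : r ∈ Rm π 𝒯 (len π 𝒯 r) := by
  obtain ⟨m, hm⟩ := Set.mem_iUnion.mp h
  have hne : {n : ℕ | r ∈ Rm π 𝒯 n}.Nonempty := ⟨m, hm⟩
  exact Nat.sInf_mem hne

lemma len_le {r : K} {m : ℕ} (h : r ∈ Rm π 𝒯 m) : len π 𝒯 r ≤ m := Nat.sInf_le h

lemma len_pos {r : K} (h : r ∈ RPlus π 𝒯) : 0 < len π 𝒯 r := by
  rw [DSW.mem_RPlus_iff] at h
  by_contra hc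
  push_neg at hc
  interval_cases hl : len π 𝒯 r
  have := hK.mem_Rm_len h.1
  rw [hl, hK.Rm_zero'] at this
  exact h.2 this

lemma norm_le_one_of_RR {r : K} (h : r ∈ RR π 𝒯) : ‖r‖ ≤ 1 :=
  hK.Rm_norm_le (hK.mem_Rm_len h)

lemma rminus_def (r : K) : rminus π 𝒯 r = trunc π 𝒯 r (len π 𝒯 r - 1) := rfl

lemma rminus_spec {r : K} (h : r ∈ RPlus π 𝒯) :
    rminus π 𝒯 r ∈ Rm π 𝒯 (len π 𝒯 r - 1) ∧
      ‖r - rminus π 𝒯 r‖ ≤ ‖π‖ ^ (len π 𝒯 r - 1) := by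
  rw [hK.rminus_def r]
  exact hK.trunc_spec (hK.norm_le_one_of_RR (DSW.mem_RPlus_iff.mp h).1) (len π 𝒯 r - 1)

lemma gamma_eq {r : K} (h0 : r ≠ 0) : gamma π 𝒯 r = r - rminus π 𝒯 r := if_neg h0

lemma gamma_norm {r : K} (h : r ∈ RPlus π 𝒯) :
    ‖gamma π 𝒯 r‖ = ‖π‖ ^ (len π 𝒯 r - 1) := by
  have h' := DSW.mem_RPlus_iff.mp h
  rw [hK.gamma_eq h'.2]
  rcases lt_or_eq_of_le (hK.rminus_spec h).2 with hlt | heq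
  · exfalso
    have h1 : ‖r - rminus π 𝒯 r‖ ≤ ‖π‖ ^ (len π 𝒯 r - 1 + 1) := hK.norm_lt_pow hlt
    have h2 : len π 𝒯 r - 1 + 1 = len π 𝒯 r := by
      have := hK.len_pos h; omega
    rw [h2] at h1
    have h3a : rminus π 𝒯 r ∈ Rm π 𝒯 (len π 𝒯 r - 1) := (hK.rminus_spec h).1
    have h3 : rminus π 𝒯 r ∈ Rm π 𝒯 (len π 𝒯 r) :=
      hK.Rm_mono (m := len π 𝒯 r - 1) (n := len π 𝒯 r) (Nat.sub_le _ _) h3a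
    have h4 : r = rminus π 𝒯 r := hK.sep _ (hK.mem_Rm_len h'.1) h3 h1
    have h5 : len π 𝒯 r ≤ len π 𝒯 r - 1 := hK.len_le (Set.mem_of_eq_of_mem h4 h3a)
    have := hK.len_pos h; omega
  · exact heq

lemma gamma_ne {r : K} (h : r ∈ RPlus π 𝒯) : gamma π 𝒯 r ≠ 0 := by
  intro hc
  have := hK.gamma_norm h
  have hp : (0:ℝ) < ‖π‖ ^ (len π 𝒯 r - 1) := pow_pos hK.normπ_pos _
  rw [hc, norm_zero] at this
  exact (ne_of_gt hp) this.symm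

lemma bg_eq (f : K → K) {r : K} (h : r ∈ RPlus π 𝒯) :
    b0 π 𝒯 f r * (gamma π 𝒯 r)⁻¹ = (f r - f (rminus π 𝒯 r)) * (r - rminus π 𝒯 r)⁻¹ := by
  have h' := DSW.mem_RPlus_iff.mp h
  rw [b0, if_neg h'.2, hK.gamma_eq h'.2]

lemma jump {x : K} (hx : ‖x‖ ≤ 1) (k : ℕ)
    (hne : trunc π 𝒯 x (k + 1) ≠ trunc π 𝒯 x k) :
    trunc π 𝒯 x (k + 1) ∈ RPlus π 𝒯 ∧ len π 𝒯 (trunc π 𝒯 x (k + 1)) = k + 1 ∧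
      rminus π 𝒯 (trunc π 𝒯 x (k + 1)) = trunc π 𝒯 x k := by
  set r := trunc π 𝒯 x (k + 1) with hr_def
  have hrm : r ∈ Rm π 𝒯 (k + 1) := (hK.trunc_spec hx (k + 1)).1
  have hrd : ‖x - r‖ ≤ ‖π‖ ^ (k + 1) := (hK.trunc_spec hx (k + 1)).2
  have hRR : r ∈ RR π 𝒯 := hK.Rm_subset_RR _ hrm
  have hlen_le : len π 𝒯 r ≤ k + 1 := hK.len_le hrm
  have hnotle : ¬ len π 𝒯 r ≤ k := by
    intro hle
    have h1 : r ∈ Rm π 𝒯 k := hK.Rm_mono hle (hK.mem_Rm_len hRR)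
    have h2 : ‖x - r‖ ≤ ‖π‖ ^ k := hrd.trans
      (pow_le_pow_of_le_one hK.normπ_pos.le hK.normπ_lt_one.le (by omega))
    exact hne ((hK.trunc_eq hx h1 h2).symm ▸ rfl)
  have hlen : len π 𝒯 r = k + 1 := by omega
  have hr0 : r ≠ 0 := by
    intro hc
    rw [hc] at hlen
    have : len π 𝒯 (0 : K) ≤ 0 := hK.len_le (hK.Rm_zero_mem 0)
    omega
  have hRP : r ∈ RPlus π 𝒯 := DSW.mem_RPlus_iff.mpr ⟨hRR, hr0⟩
  refine ⟨hRP, hlen, ?_⟩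
  have hrm1 : ‖r‖ ≤ 1 := hK.Rm_norm_le hrm
  have hxk : trunc π 𝒯 x k ∈ Rm π 𝒯 k := (hK.trunc_spec hx k).1
  have hclose : ‖r - trunc π 𝒯 x k‖ ≤ ‖π‖ ^ k := by
    have he : r - trunc π 𝒯 x k = (x - trunc π 𝒯 x k) - (x - r) := by ring
    rw [he]
    refine (norm_sub_le_max' _ _).trans ?_
    rw [max_le_iff]
    refine ⟨(hK.trunc_spec hx k).2, hrd.trans ?_⟩
    exact pow_le_pow_of_le_one hK.normπ_pos.le hK.normπ_lt_one.le (by omega)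
  show trunc π 𝒯 r (len π 𝒯 r - 1) = trunc π 𝒯 x k
  rw [hlen]
  simpa using hK.trunc_eq hrm1 hxk hclose

lemma trunc_tendsto {x : K} (hx : ‖x‖ ≤ 1) :
    Filter.Tendsto (trunc π 𝒯 x) Filter.atTop (nhds x) := by
  rw [tendsto_iff_dist_tendsto_zero]
  refine squeeze_zero (fun m => dist_nonneg) (fun m => ?_)
    (tendsto_pow_atTop_nhds_zero_of_lt_one hK.normπ_pos.le hK.normπ_lt_one)
  rw [dist_eq_norm, ← norm_neg]
  simpa using (hK.trunc_spec hx m).2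

lemma Rm_finite (m : ℕ) : (Rm π 𝒯 m).Finite := by
  have hsub : Rm π 𝒯 m ⊆
      (fun a : Fin m → K => ∑ i, a i * π ^ (i : ℕ)) '' (Set.univ.pi fun _ => 𝒯) := by
    rintro x ⟨a, ha, rfl⟩
    exact ⟨a, fun i _ => ha i, rfl⟩
  exact ((Set.Finite.pi fun _ => hK.finite_rep).image _).subset hsub

lemma exists_good {x : K} (hx : ‖x‖ ≤ 1) (m : ℕ) (u v w : K) :
    ∃ r ∈ RR π 𝒯, ‖r - x‖ ≤ ‖π‖ ^ m ∧ r ≠ u ∧ r ≠ v ∧ r ≠ w := by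
  obtain ⟨t, htT, ht0⟩ : ∃ t ∈ 𝒯, t ≠ 0 := by
    have h1 : 1 < 𝒯.ncard := by
      rw [← Nat.card_coe_set_eq, hK.card_rep]; exact hK.one_lt_q
    obtain ⟨b, hb, hbne⟩ := Set.exists_ne_of_one_lt_ncard h1 0
    exact ⟨b, hb, hbne⟩
  set s := trunc π 𝒯 x m with hs_def
  have hsm : s ∈ Rm π 𝒯 m := (hK.trunc_spec hx m).1
  have hsd : ‖x - s‖ ≤ ‖π‖ ^ m := (hK.trunc_spec hx m).2
  have hc_mem : ∀ i : ℕ, s + t * π ^ (m + i) ∈ RR π 𝒯 := by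
    intro i
    refine hK.Rm_subset_RR (m + i + 1) (hK.Rm_snoc ?_ htT)
    exact hK.Rm_mono (by omega) hsm
  have hc_close : ∀ i : ℕ, ‖(s + t * π ^ (m + i)) - x‖ ≤ ‖π‖ ^ m := by
    intro i
    have he : (s + t * π ^ (m + i)) - x = (t * π ^ (m + i)) - (x - s) := by ring
    rw [he]
    refine (norm_sub_le_max' _ _).trans ?_
    rw [max_le_iff]
    constructor
    · rw [norm_mul, norm_pow]
      calc ‖t‖ * ‖π‖ ^ (m + i) ≤ 1 * ‖π‖ ^ m := by
            refine mul_le_mul (hK.rep_subset htT) ?_ (by positivity) zero_le_one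
            exact pow_le_pow_of_le_one hK.normπ_pos.le hK.normπ_lt_one.le (by omega)
        _ = ‖π‖ ^ m := one_mul _
    · exact hsd
  have hc_ne : ∀ i j : ℕ, i < j → s + t * π ^ (m + i) ≠ s + t * π ^ (m + j) := by
    intro i j hij hc
    have h1 : t * π ^ (m + i) = t * π ^ (m + j) := add_left_cancel hc
    have h2 : π ^ (m + i) = π ^ (m + j) := mul_left_cancel₀ ht0 h1
    have h3 : ‖π‖ ^ (m + i) = ‖π‖ ^ (m + j) := by
      rw [← norm_pow, ← norm_pow, h2]
    have h4 : ‖π‖ ^ (m + j) < ‖π‖ ^ (m + i) :=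
      pow_lt_pow_right_of_lt_one₀ hK.normπ_pos hK.normπ_lt_one (by omega)
    rw [h3] at h4
    exact lt_irrefl _ h4
  classical
  set c : ℕ → K := fun i => s + t * π ^ (m + i) with hc_def
  have hFcard : ({c 1, c 2, c 3, c 4} : Finset K).card = 4 := by
    rw [Finset.card_insert_of_notMem, Finset.card_insert_of_notMem,
      Finset.card_insert_of_notMem, Finset.card_singleton]
    · simp only [Finset.mem_singleton]
      exact hc_ne 3 4 (by omega)
    · simp only [Finset.mem_insert, Finset.mem_singleton]
      push_neg
      exact ⟨hc_ne 2 3 (by omega), hc_ne 2 4 (by omega)⟩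
    · simp only [Finset.mem_insert, Finset.mem_singleton]
      push_neg
      exact ⟨hc_ne 1 2 (by omega), hc_ne 1 3 (by omega), hc_ne 1 4 (by omega)⟩
  have hGcard : ({u, v, w} : Finset K).card ≤ 3 := by
    refine (Finset.card_insert_le _ _).trans ?_
    have : ({v, w} : Finset K).card ≤ 2 := by
      refine (Finset.card_insert_le _ _).trans ?_
      simp
    omega
  have hnsub : ¬ ({c 1, c 2, c 3, c 4} : Finset K) ⊆ ({u, v, w} : Finset K) := by
    intro hsub
    have := Finset.card_le_card hsub
    omega
  obtain ⟨r, hrF, hrG⟩ := Finset.not_subset.mp hnsub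
  have hrF' : r = c 1 ∨ r = c 2 ∨ r = c 3 ∨ r = c 4 := by
    simpa using hrF
  have hrG' : r ≠ u ∧ r ≠ v ∧ r ≠ w := by
    simp only [Finset.mem_insert, Finset.mem_singleton] at hrG
    push_neg at hrG
    exact hrG
  rcases hrF' with rfl | rfl | rfl | rfl
  · exact ⟨_, hc_mem 1, hc_close 1, hrG'.1, hrG'.2.1, hrG'.2.2⟩
  · exact ⟨_, hc_mem 2, hc_close 2, hrG'.1, hrG'.2.1, hrG'.2.2⟩
  · exact ⟨_, hc_mem 3, hc_close 3, hrG'.1, hrG'.2.1, hrG'.2.2⟩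
  · exact ⟨_, hc_mem 4, hc_close 4, hrG'.1, hrG'.2.1, hrG'.2.2⟩

lemma telescope_sum (g : ℕ → K) (m : ℕ) :
    ∀ N, m ≤ N → ∑ k ∈ Finset.Ico m N, (g (k + 1) - g k) = g N - g m := by
  intro N hN
  induction N, hN using Nat.le_induction with
  | base => simp
  | succ N hN ih => rw [Finset.sum_Ico_succ_top hN, ih]; ring

end LocalFieldData
end Aux3

section Aux4
set_option linter.unusedSectionVars false
set_option maxHeartbeats 1000000

variable {K : Type*} [NontriviallyNormedField K] [CompleteSpace K] [IsUltrametricDist K]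
variable {π : K} {𝒯 : Set K} {q : ℕ}

lemma DSW.Phi_one (f : K → K) (x : Fin 2 → K) :
    Phi f 1 x = (f (x 0) - f (x 1)) / (x 0 - x 1) := rfl

lemma DSW.inj2 {x : Fin 2 → K} (hinj : Function.Injective x) : x 0 ≠ x 1 := by
  intro h
  have := hinj h
  simp at this

namespace LocalFieldData

open Filter Topology

variable (hK : LocalFieldData π 𝒯 q)
include hK

lemma exists_pow_eq {x y : K} (hx : ‖x‖ ≤ 1) (hy : ‖y‖ ≤ 1) (hne : x ≠ y) :
    ∃ m : ℕ, ‖x - y‖ = ‖π‖ ^ m := by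
  obtain ⟨n, hn⟩ := hK.norm_discrete (x - y) (sub_ne_zero.mpr hne)
  have hle1 : ‖x - y‖ ≤ 1 := by
    refine (norm_sub_le_max' x y).trans ?_
    simp [hx, hy]
  have hn0 : 0 ≤ n := by
    by_contra hc
    push_neg at hc
    have h1 : ‖π‖ ^ (-1 : ℤ) ≤ ‖π‖ ^ n :=
      zpow_le_zpow_right_of_le_one₀ hK.normπ_pos hK.normπ_lt_one.le (by omega)
    have h2 : (1 : ℝ) < ‖π‖ ^ (-1 : ℤ) := by
      rw [zpow_neg_one]
      exact (one_lt_inv₀ hK.normπ_pos).mpr hK.normπ_lt_one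
    rw [← hn] at h1
    linarith
  refine ⟨n.toNat, ?_⟩
  rw [hn, ← zpow_natCast, Int.toNat_of_nonneg hn0]

lemma keyEst {f : K → K} (hf : ContinuousOn f (Rint K)) {a : K} (ha : ‖a‖ ≤ 1)
    {L : K} (hL : Tendsto (fun r => b0 π 𝒯 f r * (gamma π 𝒯 r)⁻¹)
      (𝓝[RPlus π 𝒯 \ {a}] a) (𝓝 L)) {ε : ℝ} (hε : 0 < ε) :
    ∃ δ > 0, ∀ x y : K, ‖x‖ ≤ 1 → ‖y‖ ≤ 1 → x ≠ y → ‖x - a‖ < δ → ‖y - a‖ < δ →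
      ‖(f x - f y) * (x - y)⁻¹ - L‖ ≤ ε := by
  rw [Metric.tendsto_nhdsWithin_nhds] at hL
  obtain ⟨δ₀, hδ₀, hball⟩ := hL ε hε
  have hρ0 := hK.normπ_pos
  have hρ1 := hK.normπ_lt_one
  refine ⟨min δ₀ (‖π‖ ^ len π 𝒯 a), lt_min hδ₀ (pow_pos hρ0 _), ?_⟩
  intro x y hx hy hxy hxa hya
  obtain ⟨m, hm⟩ := hK.exists_pow_eq hx hy hxy
  have hxyδ : ‖x - y‖ < min δ₀ (‖π‖ ^ len π 𝒯 a) := by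
    have he : x - y = (x - a) - (y - a) := by ring
    rw [he]
    exact lt_of_le_of_lt (norm_sub_le_max' _ _) (max_lt hxa hya)
  -- common truncation at level m
  have hz : trunc π 𝒯 y m = trunc π 𝒯 x m := by
    refine hK.trunc_eq hy (hK.trunc_spec hx m).1 ?_
    have he : y - trunc π 𝒯 x m = (x - trunc π 𝒯 x m) - (x - y) := by ring
    rw [he]
    refine (norm_sub_le_max' _ _).trans ?_
    rw [max_le_iff]
    exact ⟨(hK.trunc_spec hx m).2, le_of_eq hm⟩
  -- per-term bound
  have key : ∀ u : K, ‖u‖ ≤ 1 → ‖u - a‖ < min δ₀ (‖π‖ ^ len π 𝒯 a) → ∀ k, m ≤ k →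
      ‖f (trunc π 𝒯 u (k + 1)) - f (trunc π 𝒯 u k) -
        L * (trunc π 𝒯 u (k + 1) - trunc π 𝒯 u k)‖ ≤ ε * ‖x - y‖ := by
    intro u hu hua k hk
    by_cases hne : trunc π 𝒯 u (k + 1) = trunc π 𝒯 u k
    · rw [hne]
      simp only [sub_self, mul_zero, sub_zero, norm_zero]
      positivity
    obtain ⟨hRP, hlen, hrm⟩ := hK.jump hu k hne
    set r := trunc π 𝒯 u (k + 1) with hr_def
    have hru : ‖r - u‖ ≤ ‖π‖ ^ (k + 1) := by
      rw [← norm_neg]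
      simpa using (hK.trunc_spec hu (k + 1)).2
    have hkm : ‖π‖ ^ (k + 1) ≤ ‖π‖ ^ m :=
      pow_le_pow_of_le_one hρ0.le hρ1.le (by omega)
    have hra : ‖r - a‖ < min δ₀ (‖π‖ ^ len π 𝒯 a) := by
      have he : r - a = (r - u) + (u - a) := by ring
      rw [he]
      refine lt_of_le_of_lt (IsUltrametricDist.norm_add_le_max _ _) (max_lt ?_ hua)
      exact lt_of_le_of_lt (hru.trans hkm) (hm ▸ hxyδ)
    have hrne_a : r ≠ a := by
      intro hc
      rw [hc] at hlen
      have h1 : ‖x - y‖ < ‖π‖ ^ len π 𝒯 a := lt_of_lt_of_le hxyδ (min_le_right _ _)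
      rw [hm, hlen] at h1
      exact lt_irrefl _ (h1.trans_le hkm)
    have hct := hball ⟨hRP, hrne_a⟩ (by rw [dist_eq_norm]; exact hra.trans_le (min_le_left _ _))
    rw [dist_eq_norm] at hct
    -- rewrite the term
    have hγne : r - rminus π 𝒯 r ≠ 0 := by
      rw [← hK.gamma_eq (DSW.mem_RPlus_iff.mp hRP).2]
      exact hK.gamma_ne hRP
    have hterm : f r - f (trunc π 𝒯 u k) - L * (r - trunc π 𝒯 u k) =
        (b0 π 𝒯 f r * (gamma π 𝒯 r)⁻¹ - L) * (r - trunc π 𝒯 u k) := by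
      rw [← hrm, hK.bg_eq f hRP]
      field_simp
    rw [hterm, norm_mul]
    have hb1 : ‖r - trunc π 𝒯 u k‖ ≤ ‖x - y‖ := by
      rw [← hrm]
      have h2 : ‖r - rminus π 𝒯 r‖ ≤ ‖π‖ ^ (len π 𝒯 r - 1) := (hK.rminus_spec hRP).2
      rw [hlen] at h2
      simp only [Nat.add_sub_cancel] at h2
      rw [hm]
      exact h2.trans (pow_le_pow_of_le_one hρ0.le hρ1.le hk)
    exact mul_le_mul hct.le hb1 (norm_nonneg _) hε.le
  -- sum bound
  have hsum : ∀ N : ℕ,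
      ‖(∑ k ∈ Finset.Ico m N, (f (trunc π 𝒯 x (k + 1)) - f (trunc π 𝒯 x k) -
          L * (trunc π 𝒯 x (k + 1) - trunc π 𝒯 x k))) -
        (∑ k ∈ Finset.Ico m N, (f (trunc π 𝒯 y (k + 1)) - f (trunc π 𝒯 y k) -
          L * (trunc π 𝒯 y (k + 1) - trunc π 𝒯 y k)))‖ ≤ ε * ‖x - y‖ := by
    intro N
    have hεxy : (0:ℝ) ≤ ε * ‖x - y‖ := by positivity
    refine (norm_sub_le_max' _ _).trans ?_
    rw [max_le_iff]
    constructor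
    · refine IsUltrametricDist.norm_sum_le_of_forall_le_of_nonneg hεxy ?_
      intro k hkmem
      exact key x hx hxa k (Finset.mem_Ico.mp hkmem).1
    · refine IsUltrametricDist.norm_sum_le_of_forall_le_of_nonneg hεxy ?_
      intro k hkmem
      exact key y hy hya k (Finset.mem_Ico.mp hkmem).1
  -- telescoping
  have htel : ∀ u : K, ∀ N, m ≤ N →
      ∑ k ∈ Finset.Ico m N, (f (trunc π 𝒯 u (k + 1)) - f (trunc π 𝒯 u k) -
          L * (trunc π 𝒯 u (k + 1) - trunc π 𝒯 u k)) =
        f (trunc π 𝒯 u N) - f (trunc π 𝒯 u m) - L * (trunc π 𝒯 u N - trunc π 𝒯 u m) := by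
    intro u N hN
    rw [Finset.sum_sub_distrib, ← Finset.mul_sum]
    rw [hK.telescope_sum (fun k => f (trunc π 𝒯 u k)) m N hN,
      hK.telescope_sum (fun k => trunc π 𝒯 u k) m N hN]
  -- limits
  have hmap : ∀ u : K, ‖u‖ ≤ 1 → Tendsto (fun N => f (trunc π 𝒯 u N)) atTop (𝓝 (f u)) := by
    intro u hu
    refine (hf u hu).tendsto.comp ?_
    rw [tendsto_nhdsWithin_iff]
    refine ⟨hK.trunc_tendsto hu, Filter.Eventually.of_forall fun N => ?_⟩
    exact hK.Rm_norm_le (hK.trunc_spec hu N).1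
  have hlim : Tendsto (fun N =>
      (f (trunc π 𝒯 x N) - f (trunc π 𝒯 x m) - L * (trunc π 𝒯 x N - trunc π 𝒯 x m)) -
        (f (trunc π 𝒯 y N) - f (trunc π 𝒯 y m) - L * (trunc π 𝒯 y N - trunc π 𝒯 y m)))
      atTop (𝓝 ((f x - f (trunc π 𝒯 x m) - L * (x - trunc π 𝒯 x m)) -
        (f y - f (trunc π 𝒯 y m) - L * (y - trunc π 𝒯 y m)))) := by
    refine Tendsto.sub ?_ ?_
    · exact ((hmap x hx).sub_const _).sub
        (tendsto_const_nhds.mul ((hK.trunc_tendsto hx).sub_const _))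
    · exact ((hmap y hy).sub_const _).sub
        (tendsto_const_nhds.mul ((hK.trunc_tendsto hy).sub_const _))
  have hval : (f x - f (trunc π 𝒯 x m) - L * (x - trunc π 𝒯 x m)) -
      (f y - f (trunc π 𝒯 y m) - L * (y - trunc π 𝒯 y m)) = f x - f y - L * (x - y) := by
    rw [hz]; ring
  rw [hval] at hlim
  have hfinal : ‖f x - f y - L * (x - y)‖ ≤ ε * ‖x - y‖ := by
    refine le_of_tendsto hlim.norm ?_
    rw [Filter.eventually_atTop]
    refine ⟨m, fun N hN => ?_⟩
    rw [← htel x N hN, ← htel y N hN]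
    exact hsum N
  have hxy0 : x - y ≠ 0 := sub_ne_zero.mpr hxy
  have hre : (f x - f y) * (x - y)⁻¹ - L = (f x - f y - L * (x - y)) * (x - y)⁻¹ := by
    field_simp
  rw [hre, norm_mul, norm_inv]
  rw [mul_inv_le_iff₀ (by simpa using norm_pos_iff.mpr hxy0)]
  exact hfinal

lemma len_eventually {a : K} (M : ℕ) :
    ∀ᶠ r in 𝓝[RPlus π 𝒯 \ {a}] a, M < len π 𝒯 r := by
  have hcl : IsClosed (Rm π 𝒯 M \ {a} : Set K) :=
    ((hK.Rm_finite M).subset Set.diff_subset).isClosed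
  have hmem : a ∈ (Rm π 𝒯 M \ {a} : Set K)ᶜ := by simp
  filter_upwards [mem_nhdsWithin_of_mem_nhds (hcl.isOpen_compl.mem_nhds hmem),
    self_mem_nhdsWithin] with r hr1 hr2
  by_contra hc
  push_neg at hc
  have hrRR : r ∈ RR π 𝒯 := (DSW.mem_RPlus_iff.mp hr2.1).1
  have : r ∈ Rm π 𝒯 M := hK.Rm_mono hc (hK.mem_Rm_len hrRR)
  exact hr1 ⟨this, hr2.2⟩

end LocalFieldData
end Aux4


set_option maxHeartbeats 1000000

/-- A continuous `f : R → K` with wavelet coefficients `b_r(f)` is a `C¹`-function iff for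
every `a ∈ R` the limit of `b_r(f)γ_r⁻¹` as `r → a` over `r ∈ ℛ₊ \ {a}` exists. -/
theorem statement_7 (π : K) (𝒯 : Set K) (q : ℕ) (hK : LocalFieldData π 𝒯 q)
    (f : K → K) (hf : ContinuousOn f (Rint K)) :
    IsCn f 1 ↔
      ∀ a ∈ Rint K, ∃ L : K,
        Tendsto (fun r => b0 π 𝒯 f r * (gamma π 𝒯 r)⁻¹) (𝓝[RPlus π 𝒯 \ {a}] a) (𝓝 L) := by
  have hρ0 := hK.normπ_pos
  have hρ1 := hK.normπ_lt_one
  constructor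
  · rintro ⟨g, hg, hgeq⟩ a ha
    have haR : ‖a‖ ≤ 1 := ha
    refine ⟨g (fun _ => a), ?_⟩
    have hlenT : Tendsto (fun r => len π 𝒯 r - 1) (𝓝[RPlus π 𝒯 \ {a}] a) atTop := by
      rw [Filter.tendsto_atTop]
      intro M
      filter_upwards [hK.len_eventually (M + 1)] with r hr
      omega
    have hpowT : Tendsto (fun r => ‖π‖ ^ (len π 𝒯 r - 1)) (𝓝[RPlus π 𝒯 \ {a}] a) (𝓝 0) :=
      (tendsto_pow_atTop_nhds_zero_of_lt_one hρ0.le hρ1).comp hlenT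
    have hidT : Tendsto (fun r : K => dist r a) (𝓝[RPlus π 𝒯 \ {a}] a) (𝓝 0) := by
      have h1 : Tendsto (fun r : K => r) (𝓝[RPlus π 𝒯 \ {a}] a) (𝓝 a) :=
        tendsto_id.mono_left nhdsWithin_le_nhds
      have h2 := h1.dist (tendsto_const_nhds :
        Tendsto (fun _ : K => a) (𝓝[RPlus π 𝒯 \ {a}] a) (𝓝 a))
      simpa using h2
    have hrmT : Tendsto (fun r => rminus π 𝒯 r) (𝓝[RPlus π 𝒯 \ {a}] a) (𝓝 a) := by
      rw [tendsto_iff_dist_tendsto_zero]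
      refine squeeze_zero' (Filter.Eventually.of_forall fun r => dist_nonneg) ?_
        (g := fun r => max (‖π‖ ^ (len π 𝒯 r - 1)) (dist r a)) ?_
      · filter_upwards [self_mem_nhdsWithin] with r hr
        have hRP : r ∈ RPlus π 𝒯 := hr.1
        rw [dist_eq_norm, dist_eq_norm]
        have he : rminus π 𝒯 r - a = (r - a) - (r - rminus π 𝒯 r) := by ring
        rw [he]
        refine (norm_sub_le_max' _ _).trans (max_le ?_ ?_)
        · exact le_max_right _ _
        · exact le_trans (hK.rminus_spec hRP).2 (le_max_left _ _)
      · have := hpowT.max hidT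
        simpa using this
    have hgc : Tendsto g (𝓝[{x : Fin 2 → K | ∀ i, ‖x i‖ ≤ 1}] (fun _ => a))
        (𝓝 (g fun _ => a)) := hg _ (fun i => haR)
    have hvecT : Tendsto (fun r : K => ![r, rminus π 𝒯 r])
        (𝓝[RPlus π 𝒯 \ {a}] a) (𝓝[{x : Fin 2 → K | ∀ i, ‖x i‖ ≤ 1}] (fun _ => a)) := by
      rw [tendsto_nhdsWithin_iff]
      constructor
      · rw [tendsto_pi_nhds]
        intro i
        fin_cases i
        · simp; exact tendsto_id.mono_left nhdsWithin_le_nhds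
        · simpa using hrmT
      · filter_upwards [self_mem_nhdsWithin] with r hr
        intro i
        fin_cases i
        · simpa using hK.norm_le_one_of_RR hr.1.1
        · simpa using hK.Rm_norm_le (hK.rminus_spec hr.1).1
    have hcomp : Tendsto (fun r : K => g ![r, rminus π 𝒯 r]) (𝓝[RPlus π 𝒯 \ {a}] a)
        (𝓝 (g fun _ => a)) := hgc.comp hvecT
    refine Filter.Tendsto.congr' ?_ hcomp
    filter_upwards [self_mem_nhdsWithin] with r hr
    have hRP : r ∈ RPlus π 𝒯 := hr.1
    have hr0 : r ≠ 0 := (DSW.mem_RPlus_iff.mp hRP).2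
    have hne : r ≠ rminus π 𝒯 r := by
      intro hc
      apply hK.gamma_ne hRP
      rw [hK.gamma_eq hr0]
      exact sub_eq_zero.mpr hc
    have hxmem : ∀ i, ‖(![r, rminus π 𝒯 r]) i‖ ≤ 1 := by
      intro i
      fin_cases i
      · simpa using hK.norm_le_one_of_RR hr.1.1
      · simpa using hK.Rm_norm_le (hK.rminus_spec hRP).1
    have hinj : Function.Injective ![r, rminus π 𝒯 r] := by
      intro i j hij
      fin_cases i <;> fin_cases j <;> simp_all
    rw [hgeq _ hxmem hinj, DSW.Phi_one]
    simp only [Matrix.cons_val_zero, Matrix.cons_val_one, Matrix.head_cons]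
    rw [hK.bg_eq f hRP, div_eq_mul_inv]
  · intro hlim
    classical
    set Lf : K → K := fun a => Classical.epsilon fun L : K =>
      Tendsto (fun r => b0 π 𝒯 f r * (gamma π 𝒯 r)⁻¹) (𝓝[RPlus π 𝒯 \ {a}] a) (𝓝 L)
      with hLf_def
    have hLf_spec : ∀ a : K, ‖a‖ ≤ 1 →
        Tendsto (fun r => b0 π 𝒯 f r * (gamma π 𝒯 r)⁻¹) (𝓝[RPlus π 𝒯 \ {a}] a) (𝓝 (Lf a)) :=
      fun a ha => Classical.epsilon_spec (hlim a ha)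
    set g : (Fin 2 → K) → K :=
      fun x => if x 0 = x 1 then Lf (x 0) else (f (x 0) - f (x 1)) / (x 0 - x 1) with hg_def
    refine ⟨g, ?_, ?_⟩
    · intro p hp
      by_cases hpd : p 0 = p 1
      · -- diagonal point
        have haR : ‖p 0‖ ≤ 1 := hp 0
        rw [Metric.continuousWithinAt_iff]
        intro ε hε
        obtain ⟨δ₁, hδ₁, hkey⟩ := hK.keyEst hf haR (hLf_spec (p 0) haR) (half_pos hε)
        obtain ⟨δ₀, hδ₀, hball⟩ :=
          Metric.tendsto_nhdsWithin_nhds.mp (hLf_spec (p 0) haR) (ε / 2) (half_pos hε)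
        refine ⟨min δ₁ δ₀, lt_min hδ₁ hδ₀, ?_⟩
        intro xv hxv hdist
        have hdi := (dist_pi_lt_iff (lt_min hδ₁ hδ₀)).mp hdist
        have hd0 : dist (xv 0) (p 0) < min δ₁ δ₀ := hdi 0
        have hd1 : dist (xv 1) (p 0) < min δ₁ δ₀ := by
          have := hdi 1
          rwa [← hpd] at this
        simp only [hg_def]
        rw [if_pos hpd]
        by_cases hxd : xv 0 = xv 1
        · -- both coords equal: compare Lf (xv 0) with Lf (p 0)
          have hbR : ‖xv 0‖ ≤ 1 := hxv 0
          rw [if_pos hxd]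
          obtain ⟨δb, hδb, hballb⟩ :=
            Metric.tendsto_nhdsWithin_nhds.mp (hLf_spec (xv 0) hbR) (ε / 2) (half_pos hε)
          obtain ⟨M, hM⟩ := exists_pow_lt_of_lt_one (lt_min hδb hδ₀) hρ1
          obtain ⟨r, hrRR, hrclose, hr0, hrb, hra⟩ := hK.exists_good hbR M 0 (xv 0) (p 0)
          have hrRP : r ∈ RPlus π 𝒯 := ⟨hrRR, hr0⟩
          have hrbδ : dist r (xv 0) < δb := by
            rw [dist_eq_norm]
            exact lt_of_le_of_lt hrclose (hM.trans_le (min_le_left _ _))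
          have hraδ : dist r (p 0) < δ₀ := by
            rw [dist_eq_norm]
            have he : r - p 0 = (r - xv 0) + (xv 0 - p 0) := by ring
            rw [he]
            refine lt_of_le_of_lt (IsUltrametricDist.norm_add_le_max _ _) (max_lt ?_ ?_)
            · exact lt_of_le_of_lt hrclose (hM.trans_le (min_le_right _ _))
            · rw [← dist_eq_norm]
              exact hd0.trans_le (min_le_right _ _)
          have h1 := hballb ⟨hrRP, hrb⟩ hrbδ
          have h2 := hball ⟨hrRP, hra⟩ hraδ
          calc dist (Lf (xv 0)) (Lf (p 0))
              ≤ dist (Lf (xv 0)) (b0 π 𝒯 f r * (gamma π 𝒯 r)⁻¹) +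
                dist (b0 π 𝒯 f r * (gamma π 𝒯 r)⁻¹) (Lf (p 0)) := dist_triangle _ _ _
            _ < ε / 2 + ε / 2 := by
                refine add_lt_add ?_ h2
                rw [dist_comm]
                exact h1
            _ = ε := by ring
        · -- distinct coords: difference quotient
          rw [if_neg hxd]
          have hbound := hkey (xv 0) (xv 1) (hxv 0) (hxv 1) hxd
            (by rw [← dist_eq_norm]; exact hd0.trans_le (min_le_left _ _))
            (by rw [← dist_eq_norm]; exact hd1.trans_le (min_le_left _ _))
          rw [dist_eq_norm, div_eq_mul_inv]
          exact lt_of_le_of_lt hbound (half_lt_self hε)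
      · -- off-diagonal point
        have hopen : IsOpen {x : Fin 2 → K | x 0 ≠ x 1} := by
          have : {x : Fin 2 → K | x 0 ≠ x 1} =
              (fun x : Fin 2 → K => x 0 - x 1) ⁻¹' {(0 : K)}ᶜ := by
            ext x
            simp [sub_ne_zero]
          rw [this]
          exact isOpen_compl_singleton.preimage ((continuous_apply 0).sub (continuous_apply 1))
        have hc : ContinuousWithinAt
            (fun x : Fin 2 → K => (f (x 0) - f (x 1)) / (x 0 - x 1))
            {x : Fin 2 → K | ∀ i, ‖x i‖ ≤ 1} p := by
          refine ContinuousWithinAt.div ?_ ?_ (sub_ne_zero.mpr hpd)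
          · refine ContinuousWithinAt.sub ?_ ?_
            · exact ContinuousWithinAt.comp (f := fun v : Fin 2 → K => v 0) (g := f)
                (hf (p 0) (hp 0)) ((continuous_apply 0).continuousWithinAt)
                (fun v hv => hv 0)
            · exact ContinuousWithinAt.comp (f := fun v : Fin 2 → K => v 1) (g := f)
                (hf (p 1) (hp 1)) ((continuous_apply 1).continuousWithinAt)
                (fun v hv => hv 1)
          · exact ((continuous_apply 0).sub (continuous_apply 1)).continuousWithinAt
        refine ContinuousWithinAt.congr_of_eventuallyEq hc ?_
          (by simp only [hg_def]; exact if_neg hpd)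
        filter_upwards [mem_nhdsWithin_of_mem_nhds (hopen.mem_nhds hpd)] with x hx
        simp only [hg_def]
        exact if_neg hx
    · intro x hx hinj
      have hne : x 0 ≠ x 1 := DSW.inj2 hinj
      simp only [hg_def]
      rw [if_neg hne, DSW.Phi_one]

end DSW
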